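/- Let r ≥ 2 and R(x,y) = x_1 y_{r,r} ∏_{i=2}^{r−1}( (∑_{j=1}^{i} x_j) y_{i,i} + ∑_{j=i+1}^{r} x_i y_{i,j} ). Then y_{1,1}·R(x,y) = ∑_{π ∈ Π_1({1,...,r})} D(π) · ∑_{c ∈ C(π)} ω(c,π), where, for a partition π with blocks π_1={1}, π_2, ..., π_k indexed so that their maxima satisfy μ_1=1 < μ_2 < ⋯ < μ_k, C(π) = {(c_2,...,c_{k−1}) : 1 ≤ c_i ≤ μ_i}, ω(c,π) = (x_{c_2}⋯x_{c_{k−1}} / (x_{μ_2}⋯x_{μ_k})) · ∏_{i=1}^{r} x_i, and D(π) = ∑_g ∏_i y_{i,g(i)} over dominating functions g on {1,...,r} with induced partition π. -/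

import Mathlib

open scoped Classical

/-- The field of rational functions in the commuting indeterminates `x_i` and
`y_{i,j}`. -/
noncomputable abbrev F : Type := FractionRing (MvPolynomial (ℕ ⊕ ℕ × ℕ) ℚ)

/-- The indeterminate `x_n`, viewed in the field `F`. -/
noncomputable def x (n : ℕ) : F :=
  algebraMap (MvPolynomial (ℕ ⊕ ℕ × ℕ) ℚ) F (MvPolynomial.X (Sum.inl n))

/-- The indeterminate `y_{i,j}`, viewed in the field `F`. -/
noncomputable def y (i j : ℕ) : F :=
  algebraMap (MvPolynomial (ℕ ⊕ ℕ × ℕ) ℚ) F (MvPolynomial.X (Sum.inr (i, j)))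

/-- `π` is a set partition of `{1,…,r}` having `{1}` (the vertex of index `0`)
as a block. -/
def IsPartition1 {r : ℕ} (π : Finset (Finset (Fin r))) : Prop :=
  (∀ B ∈ π, B.Nonempty) ∧ (∀ v : Fin r, ∃! B, B ∈ π ∧ v ∈ B) ∧
    Finset.univ.filter (fun v : Fin r => v.val = 0) ∈ π

/-- The function `g` is dominating: `g(i) ≥ i` for all `i`. -/
def Dominating {r : ℕ} (g : Fin r → Fin r) : Prop := ∀ i, i ≤ g i

/-- The partition induced by `g` is `π`: two elements lie in the same block of
`π` exactly when they lie in the same weakly connected component of the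
functional digraph of `g` (with edges `(i, g i)`). -/
def InducesPartition {r : ℕ} (g : Fin r → Fin r) (π : Finset (Finset (Fin r))) : Prop :=
  ∀ i j : Fin r, (∃ B ∈ π, i ∈ B ∧ j ∈ B) ↔ Relation.EqvGen (fun a b => g a = b) i j

/-- `D(π) = ∑_g ∏_i y_{i,g(i)}`, summed over dominating functions on `{1,…,r}`
with induced partition `π`. -/
noncomputable def D {r : ℕ} (π : Finset (Finset (Fin r))) : F :=
  ∑ g ∈ Finset.univ.filter
      (fun g : Fin r → Fin r => Dominating g ∧ InducesPartition g π),
    ∏ i : Fin r, y (i.val + 1) ((g i).val + 1)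

/-- `μ_i` (for `1 ≤ i ≤ |π|`): the `i`-th smallest of the maxima of the blocks
of `π`, recorded as a label in `{1,…,r}`. -/
noncomputable def mu {r : ℕ} (π : Finset (Finset (Fin r))) (i : ℕ) : ℕ :=
  ((π.image (fun B => B.sup (fun v => v.val + 1))).sort (· ≤ ·)).getD (i - 1) 0

/-- `C(π)`: the set of tuples `(c_2, …, c_{k-1})` with `1 ≤ c_i ≤ μ_i`,
where `k = |π|`. -/
noncomputable def C {r : ℕ} (π : Finset (Finset (Fin r))) :
    Finset (∀ i ∈ Finset.Icc 2 (π.card - 1), ℕ) :=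
  (Finset.Icc 2 (π.card - 1)).pi (fun i => Finset.Icc 1 (mu π i))

/-- `ω(c,π) = (x_{c_2} ⋯ x_{c_{k-1}} / (x_{μ_2} ⋯ x_{μ_k})) ∏_{i=1}^r x_i`. -/
noncomputable def omega {r : ℕ} (π : Finset (Finset (Fin r)))
    (c : ∀ i ∈ Finset.Icc 2 (π.card - 1), ℕ) : F :=
  (∏ i ∈ (Finset.Icc 2 (π.card - 1)).attach, x (c i.1 i.2)) /
      (∏ i ∈ Finset.Icc 2 π.card, x (mu π i)) *
    ∏ i ∈ Finset.Icc 1 r, x i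

section FGL
variable {r : ℕ}

/-- the connectivity relation -/
def E (g : Fin r → Fin r) : Fin r → Fin r → Prop := Relation.EqvGen (fun a b => g a = b)

lemma E_refl (g : Fin r → Fin r) (i : Fin r) : E g i i := Relation.EqvGen.refl i
lemma E_symm {g : Fin r → Fin r} {i j : Fin r} (h : E g i j) : E g j i := Relation.EqvGen.symm _ _ h
lemma E_trans {g : Fin r → Fin r} {i j k : Fin r} (h : E g i j) (h' : E g j k) : E g i k :=
  Relation.EqvGen.trans _ _ _ h h'
lemma E_base (g : Fin r → Fin r) (i : Fin r) : E g i (g i) := Relation.EqvGen.rel _ _ rfl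

/-- eventual image (fixed point of the component) -/
def mx (g : Fin r → Fin r) (i : Fin r) : Fin r := g^[r] i

lemma le_iterate {g : Fin r → Fin r} (hg : Dominating g) (i : Fin r) (n : ℕ) :
    i ≤ g^[n] i := by
  induction n with
  | zero => simp
  | succ n ih => exact le_trans ih (by rw [Function.iterate_succ_apply']; exact hg _)

lemma mx_fixed {g : Fin r → Fin r} (hg : Dominating g) (i : Fin r) :
    g (mx g i) = mx g i := by
  have key : ∀ n : ℕ, i.val + n ≤ (g^[n] i).val ∨ g (g^[n] i) = g^[n] i := by
    intro n
    induction n with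
    | zero => left; simp
    | succ n ih =>
      rcases ih with h | h
      · rcases eq_or_lt_of_le (hg (g^[n] i)) with h2 | h2
        · right
          rw [Function.iterate_succ_apply', ← h2, ← h2]
        · left
          rw [Function.iterate_succ_apply']
          have : (g^[n] i).val < (g (g^[n] i)).val := h2
          omega
      · right
        rw [Function.iterate_succ_apply', h, h]
  rcases key r with h | h
  · exact absurd h (by have := (g^[r] i).isLt; omega)
  · exact h

lemma mx_apply {g : Fin r → Fin r} (hg : Dominating g) (i : Fin r) :
    mx g (g i) = mx g i := by
  have : g^[r] (g i) = g (g^[r] i) := by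
    rw [← Function.iterate_succ_apply, Function.iterate_succ_apply']
  rw [mx, this]
  exact mx_fixed hg i

lemma E_iterate {g : Fin r → Fin r} (i : Fin r) (n : ℕ) : E g i (g^[n] i) := by
  induction n with
  | zero => exact E_refl g i
  | succ n ih =>
    rw [Function.iterate_succ_apply']
    exact E_trans ih (E_base g _)

lemma E_mx {g : Fin r → Fin r} (i : Fin r) : E g i (mx g i) := E_iterate i r

lemma mx_eq_of_E {g : Fin r → Fin r} (hg : Dominating g) {i j : Fin r} (h : E g i j) :
    mx g i = mx g j := by
  induction h with
  | rel a b hab => rw [← hab, mx_apply hg]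
  | refl a => rfl
  | symm a b _ ih => exact ih.symm
  | trans a b c _ _ ih1 ih2 => exact ih1.trans ih2

lemma E_iff_mx {g : Fin r → Fin r} (hg : Dominating g) (i j : Fin r) :
    E g i j ↔ mx g i = mx g j := by
  constructor
  · exact mx_eq_of_E hg
  · intro h
    exact E_trans (E_mx i) (h ▸ E_symm (E_mx j))

lemma le_mx {g : Fin r → Fin r} (hg : Dominating g) (i : Fin r) : i ≤ mx g i :=
  le_iterate hg i r

lemma mx_of_fixed {g : Fin r → Fin r} {p : Fin r} (hp : g p = p) : mx g p = p := by
  have : ∀ n, g^[n] p = p := by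
    intro n; induction n with
    | zero => rfl
    | succ n ih => rw [Function.iterate_succ_apply', ih, hp]
  exact this r

end FGL
set_option linter.unusedSectionVars false
section FGL2
variable {r : ℕ} [NeZero r]

noncomputable def blk (g : Fin r → Fin r) (i : Fin r) : Finset (Fin r) :=
  Finset.univ.filter (fun j => E g i j)

noncomputable def part (g : Fin r → Fin r) : Finset (Finset (Fin r)) :=
  Finset.univ.image (blk g)

noncomputable def fixSet (g : Fin r → Fin r) : Finset (Fin r) :=
  Finset.univ.filter (fun i => g i = i)

lemma mem_blk {g : Fin r → Fin r} {i j : Fin r} : j ∈ blk g i ↔ E g i j := by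
  simp [blk]

lemma mem_fixSet {g : Fin r → Fin r} {i : Fin r} : i ∈ fixSet g ↔ g i = i := by
  simp [fixSet]

lemma blk_mx {g : Fin r → Fin r} (hg : Dominating g) (i : Fin r) :
    blk g (mx g i) = blk g i := by
  ext j
  simp only [mem_blk, E_iff_mx hg, mx_of_fixed (mx_fixed hg i)]

lemma E_fix {g : Fin r → Fin r} (hg : Dominating g) {p q : Fin r} (hp : g p = p)
    (hq : g q = q) (h : E g p q) : p = q := by
  have := mx_eq_of_E hg h
  rwa [mx_of_fixed hp, mx_of_fixed hq] at this

lemma filter_val_zero : Finset.univ.filter (fun v : Fin r => v.val = 0) = {(0 : Fin r)} := by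
  ext v
  simp only [Finset.mem_filter, Finset.mem_univ, true_and, Finset.mem_singleton]
  rw [Fin.ext_iff, Fin.val_zero]

lemma blk_zero {g : Fin r → Fin r} (hg : Dominating g) (h0 : g 0 = 0) :
    blk g 0 = {(0 : Fin r)} := by
  ext j
  simp only [mem_blk, Finset.mem_singleton]
  constructor
  · intro h
    have := mx_eq_of_E hg h
    rw [mx_of_fixed h0] at this
    have hj := le_mx hg j
    rw [← this] at hj
    exact le_antisymm hj (Fin.zero_le j)
  · rintro rfl; exact E_refl g 0

lemma part_isPartition1 {g : Fin r → Fin r} (hg : Dominating g) (h0 : g 0 = 0) :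
    IsPartition1 (part g) := by
  refine ⟨?_, ?_, ?_⟩
  · rintro B hB
    obtain ⟨i, -, rfl⟩ := Finset.mem_image.mp hB
    exact ⟨i, mem_blk.mpr (E_refl g i)⟩
  · intro v
    refine ⟨blk g v, ⟨Finset.mem_image.mpr ⟨v, Finset.mem_univ v, rfl⟩,
      mem_blk.mpr (E_refl g v)⟩, ?_⟩
    rintro B ⟨hB, hv⟩
    obtain ⟨i, -, rfl⟩ := Finset.mem_image.mp hB
    have hiv : E g i v := mem_blk.mp hv
    ext j
    simp only [mem_blk]
    exact ⟨fun h => E_trans (E_symm hiv) h, fun h => E_trans hiv h⟩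
  · rw [filter_val_zero, ← blk_zero hg h0]
    exact Finset.mem_image.mpr ⟨0, Finset.mem_univ _, rfl⟩

lemma induces_part (g : Fin r → Fin r) : InducesPartition g (part g) := by
  intro i j
  constructor
  · rintro ⟨B, hB, hi, hj⟩
    obtain ⟨a, -, rfl⟩ := Finset.mem_image.mp hB
    exact E_trans (E_symm (mem_blk.mp hi)) (mem_blk.mp hj)
  · intro h
    exact ⟨blk g i, Finset.mem_image.mpr ⟨i, Finset.mem_univ _, rfl⟩,
      mem_blk.mpr (E_refl g i), mem_blk.mpr h⟩

lemma eq_part_of {g : Fin r → Fin r} {π : Finset (Finset (Fin r))}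
    (hπ : IsPartition1 π) (hind : InducesPartition g π) : π = part g := by
  have key : ∀ B ∈ π, ∀ i ∈ B, B = blk g i := by
    intro B hB i hi
    ext j
    simp only [mem_blk]
    constructor
    · intro hj
      exact (hind i j).mp ⟨B, hB, hi, hj⟩
    · intro hj
      obtain ⟨B', hB', hi', hj'⟩ := (hind i j).mpr hj
      obtain ⟨Bu, -, hu⟩ := hπ.2.1 i
      rw [hu B' ⟨hB', hi'⟩] at hj'
      rwa [← hu B ⟨hB, hi⟩] at hj'
  ext B
  constructor
  · intro hB
    obtain ⟨i, hi⟩ := hπ.1 B hB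
    rw [key B hB i hi]
    exact Finset.mem_image.mpr ⟨i, Finset.mem_univ _, rfl⟩
  · intro hB
    obtain ⟨i, -, rfl⟩ := Finset.mem_image.mp hB
    obtain ⟨B₀, ⟨hB₀, hiB₀⟩, -⟩ := hπ.2.1 i
    rw [← key B₀ hB₀ i hiB₀]
    exact hB₀

lemma gzero_of {g : Fin r → Fin r} {π : Finset (Finset (Fin r))}
    (hπ : IsPartition1 π) (hind : InducesPartition g π) : g 0 = 0 := by
  obtain ⟨B, hB, h0, hg0⟩ := (hind 0 (g 0)).mpr (E_base g 0)
  obtain ⟨Bu, -, hu⟩ := hπ.2.1 0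
  have h1 : B = Bu := hu B ⟨hB, h0⟩
  have h2 : (Finset.univ.filter (fun v : Fin r => v.val = 0)) = Bu :=
    hu _ ⟨hπ.2.2, by simp [filter_val_zero]⟩
  rw [filter_val_zero] at h2
  rw [h1, ← h2, Finset.mem_singleton] at hg0
  exact hg0

lemma part_eq_image_fix {g : Fin r → Fin r} (hg : Dominating g) :
    part g = (fixSet g).image (blk g) := by
  ext B
  simp only [part, Finset.mem_image]
  constructor
  · rintro ⟨i, -, rfl⟩
    exact ⟨mx g i, mem_fixSet.mpr (mx_fixed hg i), blk_mx hg i⟩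
  · rintro ⟨p, -, rfl⟩
    exact ⟨p, Finset.mem_univ _, rfl⟩

lemma card_part {g : Fin r → Fin r} (hg : Dominating g) :
    (part g).card = (fixSet g).card := by
  rw [part_eq_image_fix hg]
  apply Finset.card_image_of_injOn
  intro p hp q hq h
  exact E_fix hg (mem_fixSet.mp hp) (mem_fixSet.mp hq)
    (by rw [E_iff_mx hg, mx_of_fixed (mem_fixSet.mp hp), mx_of_fixed (mem_fixSet.mp hq)]
        have : q ∈ blk g p := h ▸ mem_blk.mpr (E_refl g q)
        have := mx_eq_of_E hg (mem_blk.mp this)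
        rwa [mx_of_fixed (mem_fixSet.mp hp), mx_of_fixed (mem_fixSet.mp hq)] at this)

lemma sup_blk {g : Fin r → Fin r} (hg : Dominating g) {p : Fin r} (hp : g p = p) :
    (blk g p).sup (fun v => v.val + 1) = p.val + 1 := by
  apply le_antisymm
  · apply Finset.sup_le
    intro v hv
    have := mx_eq_of_E hg (mem_blk.mp hv)
    rw [mx_of_fixed hp] at this
    have hv2 : v ≤ mx g v := le_mx hg v
    rw [← this] at hv2
    exact Nat.succ_le_succ hv2
  · exact Finset.le_sup (f := fun v : Fin r => v.val + 1) (mem_blk.mpr (E_refl g p))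

lemma maxima_image {g : Fin r → Fin r} (hg : Dominating g) :
    (part g).image (fun B => B.sup (fun v => v.val + 1))
      = (fixSet g).image (fun p => p.val + 1) := by
  rw [part_eq_image_fix hg, Finset.image_image]
  apply Finset.image_congr
  intro p hp
  exact sup_blk hg (mem_fixSet.mp hp)

end FGL2
section Sorted

lemma getD_lt_getD {S : Finset ℕ} {a b : ℕ} (hb : b < (S.sort (· ≤ ·)).length) (hab : a < b) :
    (S.sort (· ≤ ·)).getD a 0 < (S.sort (· ≤ ·)).getD b 0 := by
  have hmono : StrictMono (S.sort (· ≤ ·)).get := (Finset.sortedLT_sort S).strictMono_get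
  have ha : a < (S.sort (· ≤ ·)).length := lt_trans hab hb
  rw [List.getD_eq_getElem _ _ ha, List.getD_eq_getElem _ _ hb]
  exact hmono (show (⟨a, ha⟩ : Fin _) < ⟨b, hb⟩ from hab)

lemma getD_mem {S : Finset ℕ} {a : ℕ} (ha : a < (S.sort (· ≤ ·)).length) :
    (S.sort (· ≤ ·)).getD a 0 ∈ S := by
  rw [List.getD_eq_getElem _ _ ha]
  exact (Finset.mem_sort _).mp (List.getElem_mem ha)

lemma getD_zero_min {S : Finset ℕ} (h1 : 1 ∈ S) (hmin : ∀ s ∈ S, 1 ≤ s) :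
    (S.sort (· ≤ ·)).getD 0 0 = 1 := by
  have hne : S.Nonempty := ⟨1, h1⟩
  have hlen : 0 < (S.sort (· ≤ ·)).length := by
    rw [Finset.length_sort]; exact Finset.card_pos.mpr hne
  rw [List.getD_eq_getElem _ _ hlen]
  rw [Finset.sorted_zero_eq_min']
  exact le_antisymm (S.min'_le 1 h1) (hmin _ (S.min'_mem hne))

lemma getD_last_max {S : Finset ℕ} {R : ℕ} (hR : R ∈ S) (hmax : ∀ s ∈ S, s ≤ R) :
    (S.sort (· ≤ ·)).getD (S.card - 1) 0 = R := by
  have hne : S.Nonempty := ⟨R, hR⟩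
  have hlen : S.card - 1 < (S.sort (· ≤ ·)).length := by
    rw [Finset.length_sort]
    have := Finset.card_pos.mpr hne; omega
  rw [List.getD_eq_getElem _ _ hlen]
  have : S.card - 1 = (S.sort (· ≤ ·)).length - 1 := by rw [Finset.length_sort]
  rw [show ((S.sort (· ≤ ·))[S.card - 1]'hlen) = (S.sort (· ≤ ·))[(S.sort (· ≤ ·)).length - 1]'
      (by rw [← this]; exact hlen) by congr 1]
  rw [Finset.sorted_last_eq_max']
  exact le_antisymm (hmax _ (S.max'_mem hne)) (S.le_max' R hR)

lemma prod_sort_erase (S : Finset ℕ) (f : ℕ → F) (h1 : 1 ∈ S) (hmin : ∀ s ∈ S, 1 ≤ s) :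
    ∏ i ∈ Finset.Icc 2 S.card, f ((S.sort (· ≤ ·)).getD (i - 1) 0)
      = ∏ s ∈ S.erase 1, f s := by
  have hlen : (S.sort (· ≤ ·)).length = S.card := Finset.length_sort _
  apply Finset.prod_nbij (fun i => (S.sort (· ≤ ·)).getD (i - 1) 0)
  · intro i hi
    simp only [Finset.mem_Icc] at hi
    refine Finset.mem_erase.mpr ⟨?_, getD_mem (by omega)⟩
    apply Nat.ne_of_gt
    calc 1 = (S.sort (· ≤ ·)).getD 0 0 := (getD_zero_min h1 hmin).symm
      _ < _ := getD_lt_getD (by omega) (by omega)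
  · intro i hi j hj hij
    simp only [Finset.mem_coe, Finset.mem_Icc] at hi hj
    dsimp only at hij
    by_contra hne
    rcases Nat.lt_or_ge i j with h | h
    · exact absurd hij (Nat.ne_of_lt (getD_lt_getD (by omega) (by omega)))
    · have : j < i := by omega
      exact absurd hij.symm (Nat.ne_of_lt (getD_lt_getD (by omega) (by omega)))
  · intro s hs
    simp only [Finset.coe_erase, Set.mem_diff, Finset.mem_coe, Set.mem_singleton_iff] at hs
    obtain ⟨hsS, hs1⟩ := hs
    obtain ⟨⟨n, hn⟩, hns⟩ := List.mem_iff_get.mp ((Finset.mem_sort (α := ℕ) (· ≤ ·)).mpr hsS)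
    refine ⟨n + 1, ?_, ?_⟩
    · simp only [Finset.mem_coe, Finset.mem_Icc]
      constructor
      · rcases Nat.eq_zero_or_pos n with rfl | hpos
        · exfalso
          apply hs1
          rw [← getD_zero_min h1 hmin, List.getD_eq_getElem _ _ hn]
          rw [← hns]; rfl
        · omega
      · omega
    · dsimp only
      rw [Nat.add_sub_cancel, List.getD_eq_getElem _ _ hn, ← hns]; rfl
  · intro i hi; rfl

lemma prod_sort_erase2 (S : Finset ℕ) (f : ℕ → F) {R : ℕ} (h1 : 1 ∈ S)
    (hmin : ∀ s ∈ S, 1 ≤ s) (hR : R ∈ S) (hmax : ∀ s ∈ S, s ≤ R) (hR1 : 1 < R) :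
    ∏ i ∈ Finset.Icc 2 (S.card - 1), f ((S.sort (· ≤ ·)).getD (i - 1) 0)
      = ∏ s ∈ (S.erase 1).erase R, f s := by
  have hlen : (S.sort (· ≤ ·)).length = S.card := Finset.length_sort _
  have hcard2 : 2 ≤ S.card := by
    have : ({1, R} : Finset ℕ) ⊆ S := by
      intro s hs; simp only [Finset.mem_insert, Finset.mem_singleton] at hs
      rcases hs with rfl | rfl; exacts [h1, hR]
    calc 2 = ({1, R} : Finset ℕ).card := by rw [Finset.card_insert_of_notMem (by simp; omega)]; rfl
    _ ≤ S.card := Finset.card_le_card this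
  apply Finset.prod_nbij (fun i => (S.sort (· ≤ ·)).getD (i - 1) 0)
  · intro i hi
    simp only [Finset.mem_Icc] at hi
    refine Finset.mem_erase.mpr ⟨?_, Finset.mem_erase.mpr ⟨?_, getD_mem (by omega)⟩⟩
    · apply Nat.ne_of_lt
      calc (S.sort (· ≤ ·)).getD (i - 1) 0 < (S.sort (· ≤ ·)).getD (S.card - 1) 0 :=
            getD_lt_getD (by omega) (by omega)
        _ = R := getD_last_max hR hmax
    · apply Nat.ne_of_gt
      calc 1 = (S.sort (· ≤ ·)).getD 0 0 := (getD_zero_min h1 hmin).symm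
        _ < _ := getD_lt_getD (by omega) (by omega)
  · intro i hi j hj hij
    simp only [Finset.mem_coe, Finset.mem_Icc] at hi hj
    dsimp only at hij
    by_contra hne
    rcases Nat.lt_or_ge i j with h | h
    · exact absurd hij (Nat.ne_of_lt (getD_lt_getD (by omega) (by omega)))
    · have : j < i := by omega
      exact absurd hij.symm (Nat.ne_of_lt (getD_lt_getD (by omega) (by omega)))
  · intro s hs
    simp only [Finset.coe_erase, Set.mem_diff, Finset.mem_coe, Set.mem_singleton_iff] at hs
    obtain ⟨⟨hsS, hs1⟩, hsR⟩ := hs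
    obtain ⟨⟨n, hn⟩, hns⟩ := List.mem_iff_get.mp ((Finset.mem_sort (α := ℕ) (· ≤ ·)).mpr hsS)
    have hval : (S.sort (· ≤ ·)).getD n 0 = s := by
      rw [List.getD_eq_getElem _ _ hn, ← hns]; rfl
    refine ⟨n + 1, ?_, by dsimp only; rw [Nat.add_sub_cancel]; exact hval⟩
    simp only [Finset.mem_coe, Finset.mem_Icc]
    constructor
    · rcases Nat.eq_zero_or_pos n with rfl | hpos
      · exfalso; apply hs1; rw [← hval]; exact getD_zero_min h1 hmin
      · omega
    · by_contra hcon
      have hn2 : n = S.card - 1 := by omega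
      exact hsR (by rw [← hval, hn2, getD_last_max hR hmax])
  · intro i hi; rfl

end Sorted
section Wcomp
variable {r : ℕ} [NeZero r]

lemma xne (n : ℕ) : x n ≠ 0 := by
  rw [x]
  exact (map_ne_zero_iff _ (IsFractionRing.injective _ _)).mpr (MvPolynomial.X_ne_zero _)

/-- the largest element of `Fin r` -/
def lst (r : ℕ) [NeZero r] : Fin r := ⟨r - 1, by have := NeZero.pos r; omega⟩

lemma le_lst (i : Fin r) : i ≤ lst r := by
  have := i.isLt
  simp only [lst, Fin.le_def]
  omega

lemma g_lst {g : Fin r → Fin r} (hg : Dominating g) : g (lst r) = lst r :=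
  le_antisymm (le_lst _) (hg _)

lemma succ_inj : ∀ a ∈ (Finset.univ : Finset (Fin r)), ∀ b ∈ Finset.univ,
    a.val + 1 = b.val + 1 → a = b := fun a _ b _ h => Fin.ext (by omega)

lemma succ_injective : Function.Injective (fun p : Fin r => p.val + 1) :=
  fun a b h => Fin.ext (by simpa using h)

lemma prod_Icc_eq_prod_fin (f : ℕ → F) :
    ∏ i ∈ Finset.Icc 1 r, f i = ∏ i : Fin r, f (i.val + 1) := by
  symm
  apply Finset.prod_nbij (fun i : Fin r => i.val + 1)
  · intro i _
    have := i.isLt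
    simp only [Finset.mem_Icc]
    omega
  · intro a _ b _ h
    exact Fin.ext (by dsimp only at h; omega)
  · intro j hj
    simp only [Finset.mem_coe, Finset.mem_Icc] at hj
    exact ⟨⟨j - 1, by omega⟩, Finset.mem_coe.mpr (Finset.mem_univ _), by dsimp only; omega⟩
  · intro i _
    rfl

lemma W_eq {g : Fin r → Fin r} (hr : 2 ≤ r) (hg : Dominating g) (h0 : g 0 = 0) :
    ∑ c ∈ C (part g), omega (part g) c
      = (∏ p ∈ ((fixSet g).erase 0).erase (lst r), ∑ j ∈ Finset.Icc 1 (p.val + 1), x j) *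
        (x 1 * ∏ i ∈ Finset.univ \ fixSet g, x (i.val + 1)) := by
  set P := fixSet g with hP
  set S := P.image (fun p => p.val + 1) with hS
  have h0P : (0 : Fin r) ∈ P := mem_fixSet.mpr h0
  have hlP : lst r ∈ P := mem_fixSet.mpr (g_lst hg)
  have hlst_ne : (0 : Fin r) ≠ lst r := by
    intro h
    have h2 : (0 : Fin r).val = (lst r).val := by rw [h]
    rw [Fin.val_zero] at h2
    have h3 : (0 : ℕ) = r - 1 := h2
    omega
  have h1S : 1 ∈ S := Finset.mem_image.mpr ⟨0, h0P, by simp⟩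
  have hrS : r ∈ S := Finset.mem_image.mpr ⟨lst r, hlP, by have := NeZero.pos r; show r - 1 + 1 = r; omega⟩
  have hminS : ∀ s ∈ S, 1 ≤ s := by
    intro s hs
    obtain ⟨p, -, rfl⟩ := Finset.mem_image.mp hs
    omega
  have hmaxS : ∀ s ∈ S, s ≤ r := by
    intro s hs
    obtain ⟨p, -, rfl⟩ := Finset.mem_image.mp hs
    have := p.isLt; omega
  have hSmu : ∀ i, mu (part g) i = ((S.sort (· ≤ ·)).getD (i - 1) 0) := by
    intro i
    rw [mu, maxima_image hg]
  have hcard : (part g).card = S.card := by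
    rw [card_part hg, hS, Finset.card_image_of_injective _ succ_injective]
  -- the image identities
  have him1 : S.erase 1 = (P.erase 0).image (fun p : Fin r => p.val + 1) := by
    rw [Finset.image_erase succ_injective]; rfl
  have him2 : (S.erase 1).erase r = ((P.erase 0).erase (lst r)).image
      (fun p : Fin r => p.val + 1) := by
    rw [Finset.image_erase succ_injective, Finset.image_erase succ_injective]
    have : ((lst r : Fin r)).val + 1 = r := by
      have := NeZero.pos r; show r - 1 + 1 = r; omega
    rw [this]; rfl
  -- numerator
  have hnum : ∏ i ∈ Finset.Icc 2 ((part g).card - 1),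
      (∑ j ∈ Finset.Icc 1 (mu (part g) i), x j)
      = ∏ p ∈ (P.erase 0).erase (lst r), ∑ j ∈ Finset.Icc 1 (p.val + 1), x j := by
    simp only [hSmu, hcard]
    rw [prod_sort_erase2 S (fun s => ∑ j ∈ Finset.Icc 1 s, x j) h1S hminS hrS hmaxS (by omega)]
    rw [him2, Finset.prod_image (fun a _ b _ h => succ_injective h)]
  -- denominator
  have hden : ∏ i ∈ Finset.Icc 2 (part g).card, x (mu (part g) i)
      = ∏ p ∈ P.erase 0, x (p.val + 1) := by
    simp only [hSmu, hcard]
    rw [prod_sort_erase S x h1S hminS]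
    rw [him1, Finset.prod_image (fun a _ b _ h => succ_injective h)]
  have hdenne : (∏ p ∈ P.erase 0, x (p.val + 1)) ≠ 0 :=
    Finset.prod_ne_zero_iff.mpr (fun p _ => xne _)
  -- the full x product
  have hX : ∏ i ∈ Finset.Icc 1 r, x i
      = (∏ i ∈ Finset.univ \ P, x (i.val + 1)) * (x 1 * ∏ p ∈ P.erase 0, x (p.val + 1)) := by
    rw [prod_Icc_eq_prod_fin]
    rw [← Finset.prod_sdiff (Finset.subset_univ P)]
    congr 1
    rw [← Finset.mul_prod_erase P (fun p : Fin r => x (p.val + 1)) h0P]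
    norm_num
  -- main computation
  simp only [C, omega]
  have hps := Finset.prod_sum (Finset.Icc 2 ((part g).card - 1))
    (fun i => Finset.Icc 1 (mu (part g) i)) (fun i j => x j)
  rw [← Finset.sum_mul, ← Finset.sum_div, ← hps, hnum, hden, hX,
    div_mul_eq_mul_div, div_eq_iff hdenne]
  ring

end Wcomp
section PerG
variable {r : ℕ} [NeZero r]

/-- the local factor of the product -/
noncomputable def uu {r : ℕ} (i v : Fin r) : F :=
  if v = i then (∑ j ∈ Finset.Icc 1 (i.val + 1), x j) * y (i.val + 1) (i.val + 1)
  else x (i.val + 1) * y (i.val + 1) (v.val + 1)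

lemma zero_ne_lst (hr : 2 ≤ r) : (0 : Fin r) ≠ lst r := by
  intro h
  have h2 : (0 : Fin r).val = (lst r).val := by rw [h]
  rw [Fin.val_zero] at h2
  have h3 : (0 : ℕ) = r - 1 := h2
  omega

lemma lst_val_succ (hr : 2 ≤ r) : (lst r).val + 1 = r := by
  show r - 1 + 1 = r; omega

lemma per_g {g : Fin r → Fin r} (hr : 2 ≤ r) (hg : Dominating g) (h0 : g 0 = 0) :
    (∏ i : Fin r, y (i.val + 1) ((g i).val + 1)) *
        ((∏ p ∈ ((fixSet g).erase 0).erase (lst r), ∑ j ∈ Finset.Icc 1 (p.val + 1), x j) *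
          (x 1 * ∏ i ∈ Finset.univ \ fixSet g, x (i.val + 1)))
      = y 1 1 * (x 1 * y r r *
          ∏ i ∈ Finset.univ.filter (fun i : Fin r => i ≠ 0 ∧ i ≠ lst r), uu i (g i)) := by
  set P := fixSet g with hP
  set M := Finset.univ.filter (fun i : Fin r => i ≠ 0 ∧ i ≠ lst r) with hM
  have hlst_ne : (0 : Fin r) ≠ lst r := zero_ne_lst hr
  have hMsd : M = Finset.univ \ {(0 : Fin r), lst r} := by
    ext i
    simp only [hM, Finset.mem_filter, Finset.mem_univ, true_and, Finset.mem_sdiff,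
      Finset.mem_insert, Finset.mem_singleton]
    tauto
  have hy : (∏ i : Fin r, y (i.val + 1) ((g i).val + 1))
      = (∏ i ∈ M, y (i.val + 1) ((g i).val + 1)) * (y 1 1 * y r r) := by
    rw [hMsd, ← Finset.prod_sdiff (Finset.subset_univ {(0 : Fin r), lst r})]
    congr 1
    rw [Finset.prod_pair hlst_ne, h0, g_lst hg, Fin.val_zero, lst_val_succ hr]
  have hfix : M.filter (fun i => g i = i) = (P.erase 0).erase (lst r) := by
    ext i
    simp only [hM, Finset.filter_filter, Finset.mem_filter, Finset.mem_univ, true_and,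
      Finset.mem_erase, hP, mem_fixSet]
    tauto
  have hnonfix : M.filter (fun i => ¬g i = i) = Finset.univ \ P := by
    ext i
    simp only [hM, Finset.filter_filter, Finset.mem_filter, Finset.mem_univ, true_and,
      Finset.mem_sdiff, hP, mem_fixSet]
    constructor
    · tauto
    · intro hi
      refine ⟨⟨?_, ?_⟩, hi⟩
      · rintro rfl; exact hi h0
      · rintro rfl; exact hi (g_lst hg)
  have h1 : ∏ i ∈ M.filter (fun i => g i = i), uu i (g i)
      = (∏ p ∈ (P.erase 0).erase (lst r), ∑ j ∈ Finset.Icc 1 (p.val + 1), x j) *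
        ∏ i ∈ M.filter (fun i => g i = i), y (i.val + 1) ((g i).val + 1) := by
    rw [← hfix, ← Finset.prod_mul_distrib]
    apply Finset.prod_congr rfl
    intro i hi
    have hgi : g i = i := (Finset.mem_filter.mp hi).2
    rw [uu, if_pos hgi, hgi]
  have h2 : ∏ i ∈ M.filter (fun i => ¬g i = i), uu i (g i)
      = (∏ i ∈ Finset.univ \ P, x (i.val + 1)) *
        ∏ i ∈ M.filter (fun i => ¬g i = i), y (i.val + 1) ((g i).val + 1) := by
    rw [← hnonfix, ← Finset.prod_mul_distrib]
    apply Finset.prod_congr rfl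
    intro i hi
    have hgi : ¬g i = i := (Finset.mem_filter.mp hi).2
    rw [uu, if_neg hgi]
  rw [hy, ← Finset.prod_filter_mul_prod_filter_not M (fun i => g i = i) (fun i => uu i (g i)),
    h1, h2, ← Finset.prod_filter_mul_prod_filter_not M (fun i => g i = i)
      (fun i => y (i.val + 1) ((g i).val + 1))]
  ring

end PerG
section SumG
variable {r : ℕ} [NeZero r]

lemma uu_sum (hr : 2 ≤ r) (i : Fin r) :
    ∑ v ∈ Finset.Icc i (lst r), uu i v
      = (∑ j ∈ Finset.Icc 1 (i.val + 1), x j) * y (i.val + 1) (i.val + 1) +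
        ∑ j ∈ Finset.Icc (i.val + 2) r, x (i.val + 1) * y (i.val + 1) j := by
  have hmem : i ∈ Finset.Icc i (lst r) := Finset.mem_Icc.mpr ⟨le_refl i, le_lst i⟩
  rw [← Finset.add_sum_erase _ _ hmem]
  congr 1
  · rw [uu, if_pos rfl]
  · apply Finset.sum_nbij (fun v : Fin r => v.val + 1)
    · intro v hv
      simp only [Finset.mem_erase, Finset.mem_Icc] at hv
      obtain ⟨hne, hiv, hvl⟩ := hv
      have h1 : i.val ≤ v.val := hiv
      have h2 : v.val ≤ r - 1 := hvl
      have h3 : i.val ≠ v.val := fun h => hne (Fin.ext h.symm)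
      simp only [Finset.mem_Icc]
      omega
    · intro a _ b _ h
      exact Fin.ext (by dsimp only at h; omega)
    · intro j hj
      simp only [Finset.mem_coe, Finset.mem_Icc] at hj
      have hjr : j - 1 < r := by omega
      refine ⟨⟨j - 1, hjr⟩, ?_, by dsimp only; omega⟩
      simp only [Finset.mem_coe, Finset.mem_erase, Finset.mem_Icc]
      refine ⟨?_, ?_, ?_⟩
      · intro h
        have : j - 1 = i.val := congrArg Fin.val h
        omega
      · show i.val ≤ j - 1
        omega
      · show j - 1 ≤ r - 1
        omega
    · intro v hv
      simp only [Finset.mem_erase] at hv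
      rw [uu, if_neg hv.1]

lemma sum_g_eq (hr : 2 ≤ r) :
    ∑ g ∈ Finset.univ.filter (fun g : Fin r → Fin r => Dominating g ∧ g 0 = 0),
        ∏ i ∈ Finset.univ.filter (fun i : Fin r => i ≠ 0 ∧ i ≠ lst r), uu i (g i)
      = ∏ n ∈ Finset.Icc 2 (r - 1),
          ((∑ j ∈ Finset.Icc 1 n, x j) * y n n + ∑ j ∈ Finset.Icc (n + 1) r, x n * y n j) := by
  set M := Finset.univ.filter (fun i : Fin r => i ≠ 0 ∧ i ≠ lst r) with hM
  -- step 1: the sum over g equals the sum over pi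
  have step1 : ∑ g ∈ Finset.univ.filter (fun g : Fin r → Fin r => Dominating g ∧ g 0 = 0),
      ∏ i ∈ M, uu i (g i)
      = ∑ p ∈ M.pi (fun i => Finset.Icc i (lst r)), ∏ i ∈ M.attach, uu i.1 (p i.1 i.2) := by
    apply Finset.sum_nbij' (fun g => fun i _ => g i)
      (fun p => fun i => if h : i ∈ M then p i h else i)
    · intro g hg
      simp only [Finset.mem_filter, Finset.mem_univ, true_and] at hg
      apply Finset.mem_pi.mpr
      intro i _
      exact Finset.mem_Icc.mpr ⟨hg.1 i, le_lst _⟩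
    · intro p hp
      simp only [Finset.mem_filter, Finset.mem_univ, true_and]
      have hp' := Finset.mem_pi.mp hp
      have h0M : (0 : Fin r) ∉ M := by
        simp only [hM, Finset.mem_filter, Finset.mem_univ, true_and, not_and]
        intro h; exact absurd rfl h
      constructor
      · intro i
        by_cases h : i ∈ M
        · simp only [dif_pos h]
          exact (Finset.mem_Icc.mp (hp' i h)).1
        · simp only [dif_neg h]
          exact le_refl i
      · simp only [dif_neg h0M]
    · intro g hg
      simp only [Finset.mem_filter, Finset.mem_univ, true_and] at hg
      funext i
      by_cases h : i ∈ M
      · simp only [dif_pos h]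
      · simp only [dif_neg h]
        simp only [hM, Finset.mem_filter, Finset.mem_univ, true_and, not_and, not_not] at h
        by_cases h0 : i = 0
        · rw [h0, hg.2]
        · rw [h h0, g_lst hg.1]
    · intro p hp
      funext i hi
      simp only [dif_pos hi]
    · intro g hg
      rw [← Finset.prod_attach M (fun i => uu i (g i))]
  rw [step1, ← Finset.prod_sum]
  -- step 2: reindex the product
  rw [show (∏ i ∈ M, ∑ v ∈ Finset.Icc i (lst r), uu i v)
      = ∏ i ∈ M, ((∑ j ∈ Finset.Icc 1 (i.val + 1), x j) * y (i.val + 1) (i.val + 1) +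
          ∑ j ∈ Finset.Icc (i.val + 2) r, x (i.val + 1) * y (i.val + 1) j) from
    Finset.prod_congr rfl (fun i _ => uu_sum hr i)]
  apply Finset.prod_nbij (fun i : Fin r => i.val + 1)
  · intro i hi
    simp only [hM, Finset.mem_filter, Finset.mem_univ, true_and] at hi
    have h1 : i.val ≠ 0 := fun h => hi.1 (Fin.ext h)
    have h2 : i.val ≠ r - 1 := fun h => hi.2 (Fin.ext h)
    have := i.isLt
    simp only [Finset.mem_Icc]
    omega
  · intro a _ b _ h
    exact Fin.ext (by dsimp only at h; omega)
  · intro n hn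
    simp only [Finset.mem_coe, Finset.mem_Icc] at hn
    refine ⟨⟨n - 1, by omega⟩, ?_, by dsimp only; omega⟩
    simp only [Finset.mem_coe, hM, Finset.mem_filter, Finset.mem_univ, true_and]
    constructor
    · intro h
      have h2 : n - 1 = (0 : Fin r).val := congrArg Fin.val h
      rw [Fin.val_zero] at h2
      omega
    · intro h
      have h2 : n - 1 = (lst r).val := congrArg Fin.val h
      have h3 : n - 1 = r - 1 := h2
      omega
  · intro i _
    rfl

end SumG

/-- **Proposition 2.2(b) of Féray–Goulden–Lascoux.**  For `r ≥ 2`,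
`y_{1,1} · R(x,y) = ∑_{π ∈ Π_1({1,…,r})} D(π) ∑_{c ∈ C(π)} ω(c,π)`, where
`R(x,y) = x_1 y_{r,r} ∏_{i=2}^{r-1}((∑_{j=1}^i x_j) y_{i,i} + ∑_{j=i+1}^r x_i y_{i,j})`. -/
theorem right_side_dominating_expansion (r : ℕ) (hr : 2 ≤ r) :
    y 1 1 * (x 1 * y r r *
        ∏ i ∈ Finset.Icc 2 (r - 1),
          ((∑ j ∈ Finset.Icc 1 i, x j) * y i i +
            ∑ j ∈ Finset.Icc (i + 1) r, x i * y i j))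
    = ∑ π ∈ Finset.univ.filter (fun π : Finset (Finset (Fin r)) => IsPartition1 π),
        D π * ∑ c ∈ C π, omega π c := by
  haveI : NeZero r := ⟨by omega⟩
  symm
  have expand : ∀ π : Finset (Finset (Fin r)),
      D π * (∑ c ∈ C π, omega π c)
        = ∑ g : Fin r → Fin r, if Dominating g ∧ InducesPartition g π
            then (∏ i : Fin r, y (i.val + 1) ((g i).val + 1)) * ∑ c ∈ C π, omega π c else 0 := by
    intro π
    rw [D, Finset.sum_mul, Finset.sum_filter]
  rw [Finset.sum_congr rfl (fun π _ => expand π), Finset.sum_comm]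
  have inner : ∀ g : Fin r → Fin r,
      (∑ π ∈ Finset.univ.filter (fun π : Finset (Finset (Fin r)) => IsPartition1 π),
        if Dominating g ∧ InducesPartition g π
          then (∏ i : Fin r, y (i.val + 1) ((g i).val + 1)) * ∑ c ∈ C π, omega π c else 0)
      = if Dominating g ∧ g 0 = 0
          then (∏ i : Fin r, y (i.val + 1) ((g i).val + 1)) *
            ∑ c ∈ C (part g), omega (part g) c else 0 := by
    intro g
    by_cases hg : Dominating g ∧ g 0 = 0
    · rw [if_pos hg]
      rw [Finset.sum_eq_single (part g)]
      · rw [if_pos ⟨hg.1, induces_part g⟩]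
      · intro π hπ hne
        rw [if_neg]
        rintro ⟨-, hind⟩
        exact hne (eq_part_of (Finset.mem_filter.mp hπ).2 hind)
      · intro habs
        exact absurd (Finset.mem_filter.mpr
          ⟨Finset.mem_univ _, part_isPartition1 hg.1 hg.2⟩) habs
    · rw [if_neg hg]
      apply Finset.sum_eq_zero
      intro π hπ
      rw [if_neg]
      rintro ⟨hdom, hind⟩
      exact hg ⟨hdom, gzero_of (Finset.mem_filter.mp hπ).2 hind⟩
  rw [Finset.sum_congr rfl (fun g _ => inner g), ← Finset.sum_filter]
  rw [Finset.sum_congr rfl (fun g hg => by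
    obtain ⟨-, hdom, h0⟩ := Finset.mem_filter.mp hg
    rw [W_eq hr hdom h0, per_g hr hdom h0])]
  rw [← Finset.mul_sum]
  congr 1
  rw [← Finset.mul_sum]
  congr 1
  exact sum_g_eq hr
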